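/- Let G be a group with subgroups T ≤ H ≤ G satisfying N_G(H) = H·(N_G(T) ∩ N_G(H)). Then the map on conjugacy classes cl((N_G(T)∩N_G(H))/(N_G(T)∩H)) → cl(N_G(H)/H) induced by the obvious homomorphism a : (N_G(T)∩N_G(H))/(N_G(T)∩H) → N_G(H)/H is a bijection. -/

import Mathlib

/-- paper 1.5(h): given `N_G(H) = H·(N_G(T)∩N_G(H))`, the map on conjugacy
classes induced by `(N_G(T)∩N_G(H))/(N_G(T)∩H) → N_G(H)/H` is a bijection. -/
theorem conjClasses_induced_bijective {G : Type*} [Group G] (T H : Subgroup G) (hTH : T ≤ H)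
    (hdec : ∀ y ∈ Subgroup.normalizer (H : Set G), ∃ h ∈ H, ∃ n ∈ Subgroup.normalizer (T : Set G) ⊓ Subgroup.normalizer (H : Set G), y = h * n)
    [hnorm : ((Subgroup.normalizer (T : Set G) ⊓ H).subgroupOf (Subgroup.normalizer (T : Set G) ⊓ Subgroup.normalizer (H : Set G))).Normal] :
    Function.Bijective
      (ConjClasses.map
        (QuotientGroup.map ((Subgroup.normalizer (T : Set G) ⊓ H).subgroupOf (Subgroup.normalizer (T : Set G) ⊓ Subgroup.normalizer (H : Set G)))
          (H.subgroupOf (Subgroup.normalizer (H : Set G)))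
          (Subgroup.inclusion inf_le_right)
          (by
            intro x hx
            simp only [Subgroup.mem_subgroupOf, Subgroup.mem_comap] at hx ⊢
            exact hx.2))) := by
  set N : Subgroup G := (Subgroup.normalizer (T : Set G)) ⊓ (Subgroup.normalizer (H : Set G)) with hNdef
  set K : Subgroup N := ((Subgroup.normalizer (T : Set G)) ⊓ H).subgroupOf N with hKdef
  set Hn : Subgroup (Subgroup.normalizer (H : Set G)) := H.subgroupOf (Subgroup.normalizer (H : Set G)) with hHndef
  set φ : N ⧸ K →* (Subgroup.normalizer (H : Set G)) ⧸ Hn :=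
    QuotientGroup.map K Hn (Subgroup.inclusion inf_le_right)
      (by
        intro x hx
        simp only [Subgroup.mem_subgroupOf, Subgroup.mem_comap] at hx ⊢
        exact hx.2) with hφdef
  constructor
  · -- injectivity
    intro c₁ c₂ hc
    obtain ⟨q₁, rfl⟩ := ConjClasses.mk_surjective c₁
    obtain ⟨q₂, rfl⟩ := ConjClasses.mk_surjective c₂
    obtain ⟨n₁, rfl⟩ := QuotientGroup.mk'_surjective K q₁
    obtain ⟨n₂, rfl⟩ := QuotientGroup.mk'_surjective K q₂
    have hc' : ConjClasses.mk (φ (QuotientGroup.mk' K n₁))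
        = ConjClasses.mk (φ (QuotientGroup.mk' K n₂)) := hc
    rw [ConjClasses.mk_eq_mk_iff_isConj, isConj_iff] at hc'
    obtain ⟨u, hu⟩ := hc'
    obtain ⟨y, rfl⟩ := QuotientGroup.mk'_surjective Hn u
    -- hu : mk' (y * incl n₁ * y⁻¹) = mk' (incl n₂)
    have hu' : ((y * Subgroup.inclusion (inf_le_right : N ≤ (Subgroup.normalizer (H : Set G))) n₁ * y⁻¹ :
        (Subgroup.normalizer (H : Set G))) : G)⁻¹ * (n₂ : G) ∈ H := by
      have := (QuotientGroup.mk'_eq_mk' Hn).mp hu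
      obtain ⟨z, hz, hzz⟩ := this
      have hzH : ((z : (Subgroup.normalizer (H : Set G))) : G) ∈ H := hz
      have : ((y * Subgroup.inclusion (inf_le_right : N ≤ (Subgroup.normalizer (H : Set G))) n₁ * y⁻¹) * z :
          (Subgroup.normalizer (H : Set G))) = Subgroup.inclusion (inf_le_right : N ≤ (Subgroup.normalizer (H : Set G))) n₂ := hzz
      have hcoe := congrArg (fun w : (Subgroup.normalizer (H : Set G)) => (w : G)) this
      have hzeq : ((y * Subgroup.inclusion (inf_le_right : N ≤ (Subgroup.normalizer (H : Set G))) n₁ * y⁻¹ :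
          (Subgroup.normalizer (H : Set G))) : G)⁻¹ * (n₂ : G) = (z : G) := by
        simp only [Subgroup.coe_mul, Subgroup.coe_inv, Subgroup.coe_inclusion] at hcoe ⊢
        rw [← hcoe]
        group
      rw [hzeq]
      exact hzH
    obtain ⟨h, hh, n, hn, hy⟩ := hdec (y : G) y.2
    -- key: n₂⁻¹ * (n * n₁ * n⁻¹) ∈ H
    have hyn : (y : G) = h * n := hy
    have hkey : ((n : G) * (n₁ : G) * (n : G)⁻¹)⁻¹ * (n₂ : G) ∈ H := by
      have h1 : ((y : G) * (n₁ : G) * (y : G)⁻¹)⁻¹ * (n₂ : G) ∈ H := by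
        simpa using hu'
      -- rewrite y = h * n
      rw [hyn] at h1
      -- h1 : (h*n * n₁ * (h*n)⁻¹)⁻¹ * n₂ ∈ H
      have hn₂ : (n₂ : G) ∈ (Subgroup.normalizer (H : Set G)) := n₂.2.2
      have hhc : (n₂ : G)⁻¹ * h⁻¹ * (n₂ : G) ∈ H := by
        have := ((Subgroup.mem_normalizer_iff.mp ((Subgroup.normalizer (H : Set G)).inv_mem hn₂)) h⁻¹).mp
          (H.inv_mem hh)
        simpa [mul_assoc] using this
      have h1' : (n₂ : G)⁻¹ * (h * (n : G) * (n₁ : G) * (n : G)⁻¹ * h⁻¹) ∈ H := by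
        have : ((h * n * (n₁ : G) * (h * n)⁻¹)⁻¹ * (n₂ : G))⁻¹ ∈ H :=
          H.inv_mem h1
        simpa [mul_assoc, mul_inv_rev] using this
      have h2 : (n₂ : G)⁻¹ * ((n : G) * (n₁ : G) * (n : G)⁻¹) ∈ H := by
        have heq : (n₂ : G)⁻¹ * ((n : G) * (n₁ : G) * (n : G)⁻¹)
            = ((n₂ : G)⁻¹ * h⁻¹ * (n₂ : G)) *
              (((n₂ : G)⁻¹ * (h * (n : G) * (n₁ : G) * (n : G)⁻¹ * h⁻¹)) * h) := by
          group
        rw [heq]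
        exact H.mul_mem hhc (H.mul_mem h1' hh)
      have : ((n : G) * (n₁ : G) * (n : G)⁻¹)⁻¹ * (n₂ : G)
          = ((n₂ : G)⁻¹ * ((n : G) * (n₁ : G) * (n : G)⁻¹))⁻¹ := by group
      rw [this]
      exact H.inv_mem h2
    -- now produce the conjugation witness in N ⧸ K
    rw [ConjClasses.mk_eq_mk_iff_isConj, isConj_iff]
    refine ⟨QuotientGroup.mk' K ⟨n, hn⟩, ?_⟩
    have : QuotientGroup.mk' K (⟨n, hn⟩ * n₁ * ⟨n, hn⟩⁻¹) = QuotientGroup.mk' K n₂ := by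
      rw [QuotientGroup.mk'_eq_mk' _]
      refine ⟨(⟨n, hn⟩ * n₁ * ⟨n, hn⟩⁻¹)⁻¹ * n₂, ?_, by group⟩
      rw [hKdef, Subgroup.mem_subgroupOf]
      constructor
      · -- in (Subgroup.normalizer (T : Set G))
        have h1 : (n : G) ∈ (Subgroup.normalizer (T : Set G)) := hn.1
        have h2 : (n₁ : G) ∈ (Subgroup.normalizer (T : Set G)) := n₁.2.1
        have h3 : (n₂ : G) ∈ (Subgroup.normalizer (T : Set G)) := n₂.2.1
        simp only [Subgroup.coe_mul, Subgroup.coe_inv]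
        exact (Subgroup.normalizer (T : Set G)).mul_mem
          ((Subgroup.normalizer (T : Set G)).inv_mem ((Subgroup.normalizer (T : Set G)).mul_mem ((Subgroup.normalizer (T : Set G)).mul_mem h1 h2)
            ((Subgroup.normalizer (T : Set G)).inv_mem h1))) h3
      · simpa [mul_assoc] using hkey
    simpa using this
  · -- surjectivity
    intro c
    obtain ⟨q, rfl⟩ := ConjClasses.mk_surjective c
    obtain ⟨y, rfl⟩ := QuotientGroup.mk'_surjective Hn q
    obtain ⟨h, hh, n, hn, hy⟩ := hdec (y : G) y.2
    refine ⟨ConjClasses.mk (QuotientGroup.mk' K ⟨n, hn⟩), ?_⟩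
    have : ConjClasses.map φ (ConjClasses.mk (QuotientGroup.mk' K ⟨n, hn⟩))
        = ConjClasses.mk (φ (QuotientGroup.mk' K ⟨n, hn⟩)) := rfl
    rw [this, ConjClasses.mk_eq_mk_iff_isConj, isConj_iff]
    have hhH : h ∈ (Subgroup.normalizer (H : Set G)) := H.le_normalizer hh
    refine ⟨QuotientGroup.mk' Hn ⟨h, hhH⟩, ?_⟩
    have hinc : φ (QuotientGroup.mk' K ⟨n, hn⟩)
        = QuotientGroup.mk' Hn (Subgroup.inclusion (inf_le_right : N ≤ (Subgroup.normalizer (H : Set G))) ⟨n, hn⟩) :=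
      rfl
    rw [hinc]
    have : QuotientGroup.mk' Hn
        (⟨h, hhH⟩ * Subgroup.inclusion (inf_le_right : N ≤ (Subgroup.normalizer (H : Set G))) ⟨n, hn⟩ * ⟨h, hhH⟩⁻¹)
        = QuotientGroup.mk' Hn y := by
      rw [QuotientGroup.mk'_eq_mk' _]
      refine ⟨(⟨h, hhH⟩ * Subgroup.inclusion (inf_le_right : N ≤ (Subgroup.normalizer (H : Set G))) ⟨n, hn⟩ *
        ⟨h, hhH⟩⁻¹)⁻¹ * y, ?_, by group⟩
      rw [hHndef, Subgroup.mem_subgroupOf]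
      show ((⟨h, hhH⟩ * Subgroup.inclusion (inf_le_right : N ≤ (Subgroup.normalizer (H : Set G))) ⟨n, hn⟩ *
        ⟨h, hhH⟩⁻¹ : (Subgroup.normalizer (H : Set G))) : G)⁻¹ * (y : G) ∈ H
      have hcoe : ((⟨h, hhH⟩ * Subgroup.inclusion (inf_le_right : N ≤ (Subgroup.normalizer (H : Set G))) ⟨n, hn⟩ *
          ⟨h, hhH⟩⁻¹ : (Subgroup.normalizer (H : Set G))) : G) = h * n * h⁻¹ := by
        simp [Subgroup.coe_mul, Subgroup.coe_inv, Subgroup.coe_inclusion]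
      rw [hcoe, hy]
      have heq : (h * n * h⁻¹)⁻¹ * (h * n) = h := by group
      rw [heq]; exact hh
    simpa using this
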